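/- Let k, t, m ∈ ℕ. Then there exists N_0 ∈ ℕ such that for every m-type colouring Δ: {1,...,N_0} → ℕ^m, at least one of the following holds: (i) there exist a ∈ ℕ, d > 0 and a coordinate j ∈ {1,...,m} such that the arithmetic progression a, a+d, ..., a+(k-1)d lies in {1,...,N_0} and Δ_j takes the same value on all its terms; or (ii) there exist a ∈ ℕ and d > 0 such that the arithmetic progression a, a+d, ..., a+(t-1)d lies in {1,...,N_0} and is rainbow with respect to Δ. -/

import Mathlib

open Combinatorics


lemma bounded_gallai {κ : Type} [Finite κ] (S : Finset (ℕ × ℕ)) :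
    ∃ B : ℕ, 0 < B ∧ ∀ C : ℕ × ℕ → κ, ∃ (a : ℕ) (b : ℕ × ℕ) (c : κ),
      0 < a ∧ a ≤ B ∧ b.1 ≤ B ∧ b.2 ≤ B ∧ ∀ s ∈ S, C (a • s + b) = c := by
  classical
  obtain ⟨ι, _inst, hι⟩ := Line.exists_mono_in_high_dimension (↥S) κ
  set K := S.sup fun p => max p.1 p.2 with hK
  refine ⟨Fintype.card ι * (K + 1) + 1, Nat.succ_pos _, fun C => ?_⟩
  obtain ⟨l, c, hl⟩ := hι fun v => C <| ∑ i, (v i : ℕ × ℕ)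
  set s : Finset ι := Finset.univ.filter fun i => l.idxFun i = none with hs
  have hterm : ∀ i : ι, (((l.idxFun i).map (fun m : S => (m : ℕ × ℕ))).getD 0).1 ≤ K ∧
      (((l.idxFun i).map (fun m : S => (m : ℕ × ℕ))).getD 0).2 ≤ K := by
    intro i
    cases h : l.idxFun i with
    | none => simp
    | some x =>
      simp only [h, Option.map_some, Option.getD_some]
      constructor
      · exact le_trans (le_max_left _ _) (Finset.le_sup (f := fun p => max p.1 p.2) x.2)
      · exact le_trans (le_max_right _ _) (Finset.le_sup (f := fun p => max p.1 p.2) x.2)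
  refine ⟨s.card, ∑ i ∈ sᶜ, ((l.idxFun i).map (fun m : S => (m : ℕ × ℕ))).getD 0, c,
    Finset.card_pos.mpr ⟨l.proper.choose, ?_⟩, ?_, ?_, ?_, ?_⟩
  · rw [hs, Finset.mem_filter]
    exact ⟨Finset.mem_univ _, l.proper.choose_spec⟩
  · exact le_trans (Finset.card_le_univ s) (by nlinarith [Nat.zero_le K])
  · rw [Prod.fst_sum]
    calc ∑ i ∈ sᶜ, _ ≤ ∑ _i ∈ sᶜ, K := Finset.sum_le_sum fun i _ => (hterm i).1
    _ = sᶜ.card * K := by rw [Finset.sum_const, smul_eq_mul]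
    _ ≤ Fintype.card ι * (K+1) + 1 := by
        have := Finset.card_le_univ sᶜ
        nlinarith [Finset.card_le_univ sᶜ]
  · rw [Prod.snd_sum]
    calc ∑ i ∈ sᶜ, _ ≤ ∑ _i ∈ sᶜ, K := Finset.sum_le_sum fun i _ => (hterm i).2
    _ = sᶜ.card * K := by rw [Finset.sum_const, smul_eq_mul]
    _ ≤ Fintype.card ι * (K+1) + 1 := by nlinarith [Finset.card_le_univ sᶜ]
  · intro x xs
    rw [← hl ⟨x, xs⟩]
    congr
    rw [← Finset.sum_add_sum_compl s]
    congr 1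
    · rw [← Finset.sum_const]
      apply Finset.sum_congr rfl
      intro i hi
      rw [hs, Finset.mem_filter] at hi
      rw [l.apply_none _ _ hi.right, Subtype.coe_mk]
    · apply Finset.sum_congr rfl
      intro i hi
      rw [hs, Finset.compl_filter, Finset.mem_filter] at hi
      obtain ⟨y, hy⟩ := Option.ne_none_iff_exists.mp hi.right
      simp_rw [← hy, Option.map_some, Option.getD]
      rw [l.apply_some hy.symm]


/-- **Canonical Van der Waerden for `m`-type colourings.**
For all `k, t, m` there exists `N₀` such that for every `m`-type colouring
`Δ : {1, ..., N₀} → ℕ^m` one of the following holds: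
(i) there is an arithmetic progression `a, a + d, ..., a + (k-1)d` in
`{1, ..., N₀}` with `d > 0` which is monochromatic in some coordinate
`j ∈ {1, ..., m}`; or
(ii) there is an arithmetic progression `a, a + d, ..., a + (t-1)d` in
`{1, ..., N₀}` with `d > 0` which is rainbow with respect to `Δ`, i.e. for any
two distinct terms `x, y` and any coordinates `j, j'` one has `Δ_j x ≠ Δ_{j'} y`. -/
theorem canonical_vdw_mtype (k t m : ℕ) :
    ∃ N₀ : ℕ, ∀ Δ : ℕ → (Fin m → ℕ),
      (∃ (a d : ℕ) (j : Fin m), 0 < d ∧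
        (∀ i : Fin k, a + i * d ∈ Set.Icc 1 N₀) ∧
        (∀ i i' : Fin k, Δ (a + i * d) j = Δ (a + i' * d) j)) ∨
      (∃ a d : ℕ, 0 < d ∧
        (∀ i : Fin t, a + i * d ∈ Set.Icc 1 N₀) ∧
        (∀ i i' : Fin t, i ≠ i' → ∀ j j' : Fin m,
          Δ (a + i * d) j ≠ Δ (a + i' * d) j')) := by
  classical
  obtain ⟨B, hB, hgal⟩ := bounded_gallai (κ := (Fin t × Fin m) → (Fin t × Fin m) → Bool)
      ((Finset.range (t * k + 2)) ×ˢ (Finset.range (k + 2)))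
  refine ⟨B * (2*t*k + 2*t + 2*k + 8), fun Δ => ?_⟩
  set C : ℕ × ℕ → (Fin t × Fin m) → (Fin t × Fin m) → Bool :=
    fun xd u u' => decide (Δ (xd.1 + u.1 * xd.2) u.2 = Δ (xd.1 + u'.1 * xd.2) u'.2) with hCdef
  obtain ⟨a, b, c, ha, haB, hb1, hb2, hC⟩ := hgal C
  have hone : ((1 : ℕ), (1 : ℕ)) ∈ (Finset.range (t * k + 2)) ×ˢ (Finset.range (k + 2)) := by
    simp only [Finset.mem_product, Finset.mem_range]
    omega
  have hCval : ∀ (u v : ℕ), ((u, v) ∈ (Finset.range (t * k + 2)) ×ˢ (Finset.range (k + 2))) →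
      ∀ pj qj : Fin t × Fin m,
      c pj qj = decide (Δ (a * u + b.1 + pj.1 * (a * v + b.2)) pj.2
        = Δ (a * u + b.1 + qj.1 * (a * v + b.2)) qj.2) := by
    intro u v huv pj qj
    have h1 := hC (u, v) huv
    have h2 := congr_fun (congr_fun h1 pj) qj
    rw [← h2, hCdef]
    simp [smul_eq_mul]
  by_cases hcase : ∃ (p q : Fin t) (j j' : Fin m), (p : ℕ) ≠ (q : ℕ) ∧ c (p, j) (q, j') = true
  · -- monochromatic case
    left
    have hcase2 : ∃ (p q : Fin t) (j j' : Fin m), (q : ℕ) < (p : ℕ) ∧ c (p, j) (q, j') = true := by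
      obtain ⟨p, q, j, j', hne, hc⟩ := hcase
      rcases lt_or_gt_of_ne hne with h | h
      · refine ⟨q, p, j', j, h, ?_⟩
        have e1 := hCval 1 1 hone (p, j) (q, j')
        have e2 := hCval 1 1 hone (q, j') (p, j)
        rw [e1] at hc
        rw [e2]
        simp only [decide_eq_true_eq] at hc ⊢
        exact hc.symm
      · exact ⟨p, q, j, j', h, hc⟩
    obtain ⟨p, q, j, j', hlt, hc⟩ := hcase2
    set P : ℕ := (p : ℕ) with hPdef
    set Q : ℕ := (q : ℕ) with hQdef
    obtain ⟨e, hPe, he⟩ : ∃ e : ℕ, P = Q + e ∧ 0 < e := ⟨P - Q, by omega, by omega⟩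
    have hPt : P < t := p.isLt
    have hQt : Q < t := q.isLt
    refine ⟨a * (Q * k + 1) + b.1 + P * b.2, a * e, j, by positivity, ?_, ?_⟩
    · intro i
      have hik : (i : ℕ) < k := i.isLt
      constructor
      · have : 1 ≤ a * (Q * k + 1) := Nat.one_le_iff_ne_zero.mpr (by positivity)
        omega
      · have h1 : a * (Q * k + 1) ≤ B * (t * k + 1) := by
          apply Nat.mul_le_mul haB
          have : Q * k ≤ t * k := Nat.mul_le_mul_right k (le_of_lt hQt)
          omega
        have h2 : P * b.2 ≤ t * B := Nat.mul_le_mul (le_of_lt hPt) hb2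
        have h3 : (i : ℕ) * (a * e) ≤ k * (B * t) := by
          apply Nat.mul_le_mul (le_of_lt hik)
          exact Nat.mul_le_mul haB (by omega)
        calc a * (Q * k + 1) + b.1 + P * b.2 + (i : ℕ) * (a * e)
            ≤ B * (t * k + 1) + B + t * B + k * (B * t) := by omega
          _ ≤ B * (2*t*k + 2*t + 2*k + 8) := by nlinarith
    · have key : ∀ l : Fin k, Δ (a * (Q * k + 1) + b.1 + P * b.2 + l * (a * e)) j
          = Δ (a * (Q * k + 1) + b.1 + Q * b.2) j' := by
        intro l
        have hlk : (l : ℕ) < k := l.isLt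
        have hmem : ((Q * (k - (l : ℕ)) + 1, (l : ℕ))) ∈
            (Finset.range (t * k + 2)) ×ˢ (Finset.range (k + 2)) := by
          simp only [Finset.mem_product, Finset.mem_range]
          constructor
          · have : Q * (k - (l : ℕ)) ≤ t * k := Nat.mul_le_mul (le_of_lt hQt) (by omega)
            omega
          · omega
        have hval := hCval _ _ hmem (p, j) (q, j')
        rw [hval] at hc
        simp only [decide_eq_true_eq] at hc
        have haux1 : ∀ (K L R : ℕ), R + L = K →
            a * (Q * R + 1) + b.1 + (Q + e) * (a * L + b.2)
            = a * (Q * K + 1) + b.1 + (Q + e) * b.2 + L * (a * e) := by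
          intro K L R h; subst h; ring
        have haux2 : ∀ (K L R : ℕ), R + L = K →
            a * (Q * R + 1) + b.1 + Q * (a * L + b.2)
            = a * (Q * K + 1) + b.1 + Q * b.2 := by
          intro K L R h; subst h; ring
        have harith1 : a * (Q * (k - (l : ℕ)) + 1) + b.1 + P * (a * (l : ℕ) + b.2)
            = a * (Q * k + 1) + b.1 + P * b.2 + (l : ℕ) * (a * e) := by
          rw [hPe]; exact haux1 k (l : ℕ) (k - (l : ℕ)) (by omega)
        have harith2 : a * (Q * (k - (l : ℕ)) + 1) + b.1 + Q * (a * (l : ℕ) + b.2)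
            = a * (Q * k + 1) + b.1 + Q * b.2 := by
          exact haux2 k (l : ℕ) (k - (l : ℕ)) (by omega)
        rw [harith1, harith2] at hc
        exact hc
      intro i i'
      rw [key i, key i']
  · -- rainbow case
    right
    push_neg at hcase
    refine ⟨a + b.1, a + b.2, by omega, ?_, ?_⟩
    · intro i
      have hit : (i : ℕ) < t := i.isLt
      constructor
      · omega
      · have h1 : (i : ℕ) * (a + b.2) ≤ t * (B + B) := Nat.mul_le_mul (le_of_lt hit) (by omega)
        calc a + b.1 + (i : ℕ) * (a + b.2) ≤ (B + B) + t * (B + B) := by omega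
          _ ≤ B * (2*t*k + 2*t + 2*k + 8) := by
              nlinarith [Nat.zero_le (B * (t * k)), Nat.zero_le (B * k), Nat.zero_le (t * B)]
    · intro i i' hii j j'
      have hne : (i : ℕ) ≠ (i' : ℕ) := fun h => hii (Fin.ext h)
      have hfalse := hcase i i' j j' hne
      have hval := hCval 1 1 hone (i, j) (i', j')
      rw [hval] at hfalse
      simp only [ne_eq, mul_one, decide_eq_true_eq] at hfalse
      exact fun heq => hfalse heq
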